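/- Let (A, R) be a crystallographic arrangement with fan Σ = Σ_R, and let Σ' be the Boolean fan of the arrangement {e_α^⊥ : α ∈ R} in ℝ^{2n}, where 2n = |R|. Then the map φ: N → N', n ↦ (α(n))_{α∈R}, is a map of fans, i.e., for every σ ∈ Σ there exists σ' ∈ Σ' with φ(σ) ⊆ σ'; moreover for every σ' ∈ Σ', the preimage φ^{-1}(σ') (equivalently φ(V) ∩ σ' pulled back) is a cone of Σ. -/

import Mathlib

open scoped Classical Pointwise BigOperators

noncomputable section

abbrev Vr (r : ℕ) : Type := Fin r → ℝ

/-- The convex cone generated by a finite set of vectors. -/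
def coneGen {M : Type*} [AddCommGroup M] [Module ℝ M] (s : Finset M) : Set M :=
  { x | ∃ c : M → ℝ, (∀ v, 0 ≤ c v) ∧ x = ∑ v ∈ s, c v • v }

/-- Dimension of the linear span of a set. -/
def spanDim {M : Type*} [AddCommGroup M] [Module ℝ M] (s : Set M) : ℕ :=
  Module.finrank ℝ (Submodule.span ℝ s)

/-- A (linear) hyperplane: the kernel of a nonzero linear functional. -/
def IsHyp {M : Type*} [AddCommGroup M] [Module ℝ M] (H : Set M) : Prop :=
  ∃ f : M →ₗ[ℝ] ℝ, f ≠ 0 ∧ H = {x | f x = 0}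

/-- A strongly convex rational polyhedral cone with respect to the lattice `N`. -/
def IsNCone {r : ℕ} (N : AddSubgroup (Vr r)) (σ : Set (Vr r)) : Prop :=
  ∃ s : Finset (Vr r), ↑s ⊆ (N : Set (Vr r)) ∧ σ = coneGen s ∧ σ ∩ (-σ) ⊆ {0}

/-- `τ` is a face of `σ`. -/
def IsFaceOf {M : Type*} [AddCommGroup M] [Module ℝ M] (τ σ : Set M) : Prop :=
  ∃ m : M →ₗ[ℝ] ℝ, (∀ x ∈ σ, 0 ≤ m x) ∧ τ = σ ∩ {x | m x = 0}

/-- A fan in the lattice `N`. -/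
structure IsFan {r : ℕ} (N : AddSubgroup (Vr r)) (F : Set (Set (Vr r))) : Prop where
  finite : F.Finite
  nonempty : F.Nonempty
  cones : ∀ σ ∈ F, IsNCone N σ
  faces : ∀ σ ∈ F, ∀ τ : Set (Vr r), IsFaceOf τ σ → τ ∈ F
  inter : ∀ σ₁ ∈ F, ∀ σ₂ ∈ F, IsFaceOf (σ₁ ∩ σ₂) σ₁ ∧ IsFaceOf (σ₁ ∩ σ₂) σ₂

/-- Completeness: the support is everything. -/
def FanComplete {M : Type*} (F : Set (Set M)) : Prop := ⋃₀ F = Set.univ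

/-- Strong symmetry: complete, and the support of the codimension-one cones is a
finite union of hyperplanes. -/
def SSymm {M : Type*} [AddCommGroup M] [Module ℝ M] (F : Set (Set M)) : Prop :=
  FanComplete F ∧ ∃ Hs : Finset (Set M), (∀ h ∈ Hs, IsHyp h) ∧
    ⋃₀ {τ ∈ F | spanDim τ = Module.finrank ℝ M - 1} = ⋃₀ ↑Hs

/-- Central symmetry. -/
def CSymm {M : Type*} [AddCommGroup M] (F : Set (Set M)) : Prop := ∀ σ ∈ F, -σ ∈ F

/-- `b` is a ℤ-basis of the subgroup `L` of `ℝ^r`. -/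
def IsZBasis {r d : ℕ} (L : AddSubgroup (Vr r)) (b : Fin d → Vr r) : Prop :=
  LinearIndependent ℝ b ∧ AddSubgroup.closure (Set.range b) = L

/-- A (full-rank) lattice in `ℝ^r`. -/
def IsLattice {r : ℕ} (N : AddSubgroup (Vr r)) : Prop :=
  ∃ b : Fin r → Vr r, IsZBasis N b

/-- A cone generated by a part of a ℤ-basis of `L`. -/
def SmoothCone {r : ℕ} (L : AddSubgroup (Vr r)) (σ : Set (Vr r)) : Prop :=
  ∃ (d : ℕ) (b : Fin d → Vr r) (s : Finset (Fin d)),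
    IsZBasis L b ∧ σ = coneGen (s.image b)

/-- Chambers of an arrangement: connected components of the complement. -/
def chambers {r : ℕ} (A : Finset (Set (Vr r))) : Set (Set (Vr r)) :=
  { K | ∃ x ∈ (⋃₀ (A : Set (Set (Vr r))))ᶜ,
      K = connectedComponentIn (⋃₀ (A : Set (Set (Vr r))))ᶜ x }

/-- An open simplicial cone of full dimension. -/
def IsOpenSimplicialCone {r : ℕ} (K : Set (Vr r)) : Prop :=
  ∃ b : Fin r → Vr r, LinearIndependent ℝ b ∧
    K = { x | ∃ c : Fin r → ℝ, (∀ i, 0 < c i) ∧ x = ∑ i, c i • b i }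

def ker0 {r : ℕ} (α : Vr r →ₗ[ℝ] ℝ) : Set (Vr r) := {x | α x = 0}

/-- Walls of a chamber `K`. -/
def walls {r : ℕ} (A : Finset (Set (Vr r))) (K : Set (Vr r)) : Set (Set (Vr r)) :=
  { H | H ∈ A ∧ spanDim (H ∩ closure K) = r - 1 }

/-- The set `B^K` of inward-pointing normals of the walls of `K`. -/
def BK {r : ℕ} (A : Finset (Set (Vr r))) (R : Finset (Vr r →ₗ[ℝ] ℝ)) (K : Set (Vr r)) :
    Finset (Vr r →ₗ[ℝ] ℝ) :=
  R.filter (fun α => ker0 α ∈ walls A K ∧ K ⊆ {x | 0 ≤ α x})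

/-- A crystallographic arrangement `(A, R)`. -/
structure IsCrystArr {r : ℕ} (A : Finset (Set (Vr r))) (R : Finset (Vr r →ₗ[ℝ] ℝ)) : Prop where
  simplicial : ∀ K ∈ chambers A, IsOpenSimplicialCone K
  hyps : (A : Set (Set (Vr r))) = (fun α => ker0 α) '' (R : Set (Vr r →ₗ[ℝ] ℝ))
  nonzero : ∀ α ∈ R, α ≠ 0
  neg_mem : ∀ α ∈ R, -α ∈ R
  reduced : ∀ α ∈ R, ∀ β ∈ R, (∃ c : ℝ, β = c • α) → β = α ∨ β = -α
  integral : ∀ K ∈ chambers A, ∀ β ∈ R,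
    β ∈ Submodule.span ℤ ((BK A R K : Set (Vr r →ₗ[ℝ] ℝ)))

/-- The set of all intersections of closed chambers of `A`. -/
def closedChamberInts {r : ℕ} (A : Finset (Set (Vr r))) : Set (Set (Vr r)) :=
  { σ | ∃ S : Set (Set (Vr r)), S.Nonempty ∧ S ⊆ chambers A ∧ σ = ⋂₀ (closure '' S) }

/-- The lattice dual to `M_R = ∑_{α ∈ R} ℤ α`. -/
def dualLattice {r : ℕ} (R : Finset (Vr r →ₗ[ℝ] ℝ)) : AddSubgroup (Vr r) where
  carrier := { x | ∀ α ∈ R, ∃ k : ℤ, α x = k }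
  zero_mem' := fun α _ => ⟨0, by simp⟩
  add_mem' := by
    intro x y hx hy α hα
    obtain ⟨k, hk⟩ := hx α hα
    obtain ⟨m, hm⟩ := hy α hα
    exact ⟨k + m, by simp [hk, hm]⟩
  neg_mem' := by
    intro x hx α hα
    obtain ⟨k, hk⟩ := hx α hα
    exact ⟨-k, by simp [hk]⟩

/-- The star fan of `δ`, as a collection of cones in the quotient by `E`. -/
def starAt {r : ℕ} (F : Set (Set (Vr r))) (δ : Set (Vr r)) (E : Submodule ℝ (Vr r)) :
    Set (Set (Vr r ⧸ E)) :=
  { τ | ∃ σ ∈ F, δ ⊆ σ ∧ τ = E.mkQ '' σ }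

/-- The positive roots `R_+^K` at the chamber `K`. -/
def RplusF {r : ℕ} (A : Finset (Set (Vr r))) (R : Finset (Vr r →ₗ[ℝ] ℝ)) (K : Set (Vr r)) :
    Finset (Vr r →ₗ[ℝ] ℝ) :=
  R.filter (fun α => α ∈ coneGen (BK A R K))

/-- `ρ^K`, the half-sum of the positive roots at `K`. -/
def rhoK {r : ℕ} (A : Finset (Set (Vr r))) (R : Finset (Vr r →ₗ[ℝ] ℝ)) (K : Set (Vr r)) :
    Vr r →ₗ[ℝ] ℝ :=
  (1/2 : ℝ) • ∑ α ∈ RplusF A R K, α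

end

/-- The cone of the Boolean fan determined by a sign vector `ε`. -/
def boolCone {ι : Type*} (ε : ι → SignType) : Set (ι → ℝ) :=
  { x | ∀ i, (ε i = SignType.pos → 0 ≤ x i) ∧ (ε i = SignType.zero → x i = 0) ∧
      (ε i = SignType.neg → x i ≤ 0) }

section Stmt15Aux


variable {r : ℕ}

private lemma lin_cont (β : Vr r →ₗ[ℝ] ℝ) : Continuous β :=
  β.continuous_of_finiteDimensional

/-- The open sign cell of `z` w.r.t. the roots in `R`. -/
def sCell (R : Finset (Vr r →ₗ[ℝ] ℝ)) (z : Vr r) : Set (Vr r) :=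
  {x | ∀ β ∈ R, (0 < β z → 0 < β x) ∧ (β z < 0 → β x < 0)}

/-- The closed sign cell of `z` w.r.t. the roots in `R`. -/
def cCell (R : Finset (Vr r →ₗ[ℝ] ℝ)) (z : Vr r) : Set (Vr r) :=
  {x | ∀ β ∈ R, (0 < β z → 0 ≤ β x) ∧ (β z < 0 → β x ≤ 0)}

lemma sCell_eq_iInter (R : Finset (Vr r →ₗ[ℝ] ℝ)) (z : Vr r) :
    sCell R z = ⋂ β ∈ R, {x | (0 < β z → 0 < β x) ∧ (β z < 0 → β x < 0)} := by
  ext x; simp [sCell]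

lemma mem_sCell_self (R : Finset (Vr r →ₗ[ℝ] ℝ)) (z : Vr r) : z ∈ sCell R z :=
  fun _ _ => ⟨fun h => h, fun h => h⟩

lemma isOpen_sCell (R : Finset (Vr r →ₗ[ℝ] ℝ)) (z : Vr r) : IsOpen (sCell R z) := by
  rw [sCell_eq_iInter]
  refine Set.Finite.isOpen_biInter R.finite_toSet (fun β _ => ?_)
  rcases lt_trichotomy (β z) 0 with h | h | h
  · have : {x : Vr r | (0 < β z → 0 < β x) ∧ (β z < 0 → β x < 0)} = {x | β x < 0} := by
      ext x; simp [h, asymm h]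
    rw [this]; exact isOpen_lt (lin_cont β) continuous_const
  · have : {x : Vr r | (0 < β z → 0 < β x) ∧ (β z < 0 → β x < 0)} = Set.univ := by
      ext x; simp [h]
    rw [this]; exact isOpen_univ
  · have : {x : Vr r | (0 < β z → 0 < β x) ∧ (β z < 0 → β x < 0)} = {x | 0 < β x} := by
      ext x; simp [h, asymm h]
    rw [this]; exact isOpen_lt continuous_const (lin_cont β)

lemma convex_sCell (R : Finset (Vr r →ₗ[ℝ] ℝ)) (z : Vr r) : Convex ℝ (sCell R z) := by
  rw [sCell_eq_iInter]
  refine convex_iInter₂ (fun β _ => ?_)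
  rcases lt_trichotomy (β z) 0 with h | h | h
  · have : {x : Vr r | (0 < β z → 0 < β x) ∧ (β z < 0 → β x < 0)} = {x | β x < 0} := by
      ext x; simp [h, asymm h]
    rw [this]; exact convex_halfSpace_lt β.isLinear 0
  · have : {x : Vr r | (0 < β z → 0 < β x) ∧ (β z < 0 → β x < 0)} = Set.univ := by
      ext x; simp [h]
    rw [this]; exact convex_univ
  · have : {x : Vr r | (0 < β z → 0 < β x) ∧ (β z < 0 → β x < 0)} = {x | 0 < β x} := by
      ext x; simp [h, asymm h]
    rw [this]; exact convex_halfSpace_gt β.isLinear 0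

lemma isClosed_cCell (R : Finset (Vr r →ₗ[ℝ] ℝ)) (z : Vr r) : IsClosed (cCell R z) := by
  have : cCell R z = ⋂ β ∈ R, {x | (0 < β z → 0 ≤ β x) ∧ (β z < 0 → β x ≤ 0)} := by
    ext x; simp [cCell]
  rw [this]
  refine isClosed_biInter (fun β _ => ?_)
  rcases lt_trichotomy (β z) 0 with h | h | h
  · have : {x : Vr r | (0 < β z → 0 ≤ β x) ∧ (β z < 0 → β x ≤ 0)} = {x | β x ≤ 0} := by
      ext x; simp [h, asymm h]
    rw [this]; exact isClosed_le (lin_cont β) continuous_const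
  · have : {x : Vr r | (0 < β z → 0 ≤ β x) ∧ (β z < 0 → β x ≤ 0)} = Set.univ := by
      ext x; simp [h]
    rw [this]; exact isClosed_univ
  · have : {x : Vr r | (0 < β z → 0 ≤ β x) ∧ (β z < 0 → β x ≤ 0)} = {x | 0 ≤ β x} := by
      ext x; simp [h, asymm h]
    rw [this]; exact isClosed_le continuous_const (lin_cont β)

lemma sCell_subset_comparable (R : Finset (Vr r →ₗ[ℝ] ℝ)) {z : Vr r}
    (hz : ∀ β ∈ R, β z ≠ 0) : sCell R z ⊆ {x | ∀ β ∈ R, β x ≠ 0} := by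
  intro x hx β hβ
  rcases lt_trichotomy (β z) 0 with h | h | h
  · exact ne_of_lt ((hx β hβ).2 h)
  · exact absurd h (hz β hβ)
  · exact ne_of_gt ((hx β hβ).1 h)

lemma comp_eq_sCell (R : Finset (Vr r →ₗ[ℝ] ℝ)) {z : Vr r}
    (hz : ∀ β ∈ R, β z ≠ 0) :
    connectedComponentIn {x : Vr r | ∀ β ∈ R, β x ≠ 0} z = sCell R z := by
  apply Set.Subset.antisymm
  · intro x hx β hβ
    have hxU : ∀ γ ∈ R, γ x ≠ 0 := connectedComponentIn_subset _ z hx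
    have hzc : z ∈ connectedComponentIn {x : Vr r | ∀ β ∈ R, β x ≠ 0} z :=
      mem_connectedComponentIn hz
    have hpre : IsPreconnected
        (β '' connectedComponentIn {x : Vr r | ∀ β ∈ R, β x ≠ 0} z) :=
      isPreconnected_connectedComponentIn.image β (lin_cont β).continuousOn
    have hord := hpre.ordConnected
    constructor
    · intro hzpos
      by_contra hxpos
      have hxneg : β x < 0 := lt_of_le_of_ne (not_lt.mp hxpos) (hxU β hβ)
      have h0 : (0 : ℝ) ∈ β '' connectedComponentIn {x : Vr r | ∀ β ∈ R, β x ≠ 0} z :=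
        hord.out ⟨x, hx, rfl⟩ ⟨z, hzc, rfl⟩ ⟨hxneg.le, hzpos.le⟩
      obtain ⟨w, hw, hw0⟩ := h0
      exact connectedComponentIn_subset _ _ hw β hβ hw0
    · intro hzneg
      by_contra hxneg
      have hxpos : 0 < β x := lt_of_le_of_ne (not_lt.mp hxneg) (Ne.symm (hxU β hβ))
      have h0 : (0 : ℝ) ∈ β '' connectedComponentIn {x : Vr r | ∀ β ∈ R, β x ≠ 0} z :=
        hord.out ⟨z, hzc, rfl⟩ ⟨x, hx, rfl⟩ ⟨hzneg.le, hxpos.le⟩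
      obtain ⟨w, hw, hw0⟩ := h0
      exact connectedComponentIn_subset _ _ hw β hβ hw0
  · exact (convex_sCell R z).isPreconnected.subset_connectedComponentIn
      (mem_sCell_self R z) (sCell_subset_comparable R hz)

lemma closure_sCell (R : Finset (Vr r →ₗ[ℝ] ℝ)) (z : Vr r) :
    closure (sCell R z) = cCell R z := by
  apply Set.Subset.antisymm
  · exact closure_minimal
      (fun x hx β hβ => ⟨fun h => ((hx β hβ).1 h).le, fun h => ((hx β hβ).2 h).le⟩)
      (isClosed_cCell R z)
  · intro y hy
    have hcont : Continuous fun s : ℝ => y + s • (z - y) :=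
      continuous_const.add (continuous_id.smul continuous_const)
    have tend : Filter.Tendsto (fun s : ℝ => y + s • (z - y)) (nhdsWithin 0 (Set.Ioi 0)) (nhds y) := by
      have h0 : y + (0 : ℝ) • (z - y) = y := by simp
      have h1 : Filter.Tendsto (fun s : ℝ => y + s • (z - y)) (nhdsWithin 0 (Set.Ioi 0)) (nhds (y + (0:ℝ) • (z - y))) :=
        (hcont.tendsto 0).mono_left nhdsWithin_le_nhds
      rw [h0] at h1
      exact h1
    refine mem_closure_of_tendsto tend ?_
    filter_upwards [Ioc_mem_nhdsGT_of_mem (Set.left_mem_Ico.mpr zero_lt_one)] with s hs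
    intro β hβ
    have hb : β (y + s • (z - y)) = (1 - s) * β y + s * β z := by
      simp [map_add, map_smul, map_sub, smul_eq_mul]; ring
    constructor
    · intro h
      have h1 := (hy β hβ).1 h
      rw [hb]
      have h2 : 0 ≤ (1 - s) * β y := mul_nonneg (by linarith [hs.2]) h1
      nlinarith [hs.1]
    · intro h
      have h1 := (hy β hβ).2 h
      rw [hb]
      have h2 : (1 - s) * β y ≤ 0 := mul_nonpos_of_nonneg_of_nonpos (by linarith [hs.2]) h1
      nlinarith [hs.1]

lemma exists_forall_ne (s : Finset (Vr r →ₗ[ℝ] ℝ)) (hs : ∀ β ∈ s, β ≠ 0) :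
    ∃ c : Vr r, ∀ β ∈ s, β c ≠ 0 := by
  classical
  induction s using Finset.induction_on with
  | empty => exact ⟨0, fun β h => absurd h (Finset.notMem_empty β)⟩
  | @insert β₀ s hβ₀s ih =>
    obtain ⟨c, hc⟩ := ih (fun β hβ => hs β (Finset.mem_insert_of_mem hβ))
    have hβ₀ : β₀ ≠ 0 := hs β₀ (Finset.mem_insert_self _ _)
    obtain ⟨d, hd⟩ : ∃ d, β₀ d ≠ 0 := by
      by_contra h
      push_neg at h
      exact hβ₀ (LinearMap.ext fun x => by simp [h x])
    obtain ⟨t, ht⟩ := Infinite.exists_notMem_finset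
      (insert (0 : ℝ) ((insert β₀ s).image fun β => -(β c) / (β d)))
    refine ⟨c + t • d, fun β hβ => ?_⟩
    by_cases hβd : β d = 0
    · have he : β (c + t • d) = β c := by simp [map_add, map_smul, smul_eq_mul, hβd]
      rcases Finset.mem_insert.mp hβ with rfl | hβs
      · exact absurd hβd hd
      · rw [he]; exact hc β hβs
    · intro h0
      have h0' : β c + t * β d = 0 := by
        simpa [map_add, map_smul, smul_eq_mul] using h0
      have hteq : t = -(β c) / (β d) := by
        field_simp
        linarith
      apply ht
      exact Finset.mem_insert_of_mem (Finset.mem_image.mpr ⟨β, hβ, hteq.symm⟩)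


lemma sUnion_compl_eq {r : ℕ} (A : Finset (Set (Vr r))) (R : Finset (Vr r →ₗ[ℝ] ℝ))
    (hcr : IsCrystArr A R) :
    (⋃₀ (A : Set (Set (Vr r))))ᶜ = {x : Vr r | ∀ β ∈ R, β x ≠ 0} := by
  have h1 : (⋃₀ (A : Set (Set (Vr r)))) = {x : Vr r | ∃ β ∈ R, β x = 0} := by
    ext x
    simp [hcr.hyps, ker0]
  rw [h1]
  ext x; simp

lemma main_chamber {r : ℕ} (A : Finset (Set (Vr r))) (R : Finset (Vr r →ₗ[ℝ] ℝ))
    (hcr : IsCrystArr A R) (P : Set (Vr r))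
    (hP0 : (0 : Vr r) ∈ P) (hPadd : ∀ x ∈ P, ∀ y ∈ P, x + y ∈ P)
    (hside : ∀ β ∈ R, (∀ y ∈ P, 0 ≤ β y) ∨ (∀ y ∈ P, β y ≤ 0))
    {α : Vr r →ₗ[ℝ] ℝ} (hα : α ∈ R) {s : ℝ} (hs : s = 1 ∨ s = -1)
    (hPα : ∀ y ∈ P, 0 ≤ s * α y) :
    ∃ K ∈ chambers A, P ⊆ closure K ∧ ∀ x ∈ closure K, 0 ≤ s * α x := by
  classical
  have hUc := sUnion_compl_eq A R hcr
  -- a "relatively interior" point p of P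
  set R' : Finset (Vr r →ₗ[ℝ] ℝ) := R.filter (fun β => ∃ y ∈ P, β y ≠ 0) with hR'
  set g : (Vr r →ₗ[ℝ] ℝ) → Vr r :=
    fun β => if h : ∃ y ∈ P, β y ≠ 0 then h.choose else 0 with hg
  have hg1 : ∀ β ∈ R', g β ∈ P := by
    intro β hβ
    have h : ∃ y ∈ P, β y ≠ 0 := (Finset.mem_filter.mp hβ).2
    simp only [hg, dif_pos h]
    exact h.choose_spec.1
  have hg2 : ∀ β ∈ R', β (g β) ≠ 0 := by
    intro β hβ
    have h : ∃ y ∈ P, β y ≠ 0 := (Finset.mem_filter.mp hβ).2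
    simp only [hg, dif_pos h]
    exact h.choose_spec.2
  set p : Vr r := ∑ β ∈ R', g β with hp
  have hpP : p ∈ P :=
    Finset.sum_induction g (· ∈ P) (fun a b ha hb => hPadd a ha b hb) hP0 hg1
  have hrel : ∀ β ∈ R, (∃ y ∈ P, β y ≠ 0) → β p ≠ 0 := by
    intro β hβ hex
    have hβ' : β ∈ R' := Finset.mem_filter.mpr ⟨hβ, hex⟩
    have hsum : β p = ∑ γ ∈ R', β (g γ) := map_sum β g R'
    rcases hside β hβ with h | h
    · have hpos : 0 < β p := by
        rw [hsum]
        exact Finset.sum_pos' (fun γ hγ => h _ (hg1 γ hγ))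
          ⟨β, hβ', lt_of_le_of_ne (h _ (hg1 β hβ')) (Ne.symm (hg2 β hβ'))⟩
      exact hpos.ne'
    · have hpos : 0 < ∑ γ ∈ R', -β (g γ) :=
        Finset.sum_pos' (fun γ hγ => neg_nonneg.mpr (h _ (hg1 γ hγ)))
          ⟨β, hβ', neg_pos.mpr (lt_of_le_of_ne (h _ (hg1 β hβ')) (hg2 β hβ'))⟩
      rw [Finset.sum_neg_distrib, ← hsum] at hpos
      exact (neg_pos.mp hpos).ne
  -- a generic direction c
  obtain ⟨c0, hc0⟩ := exists_forall_ne R hcr.nonzero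
  have hsne : s ≠ 0 := by rcases hs with rfl | rfl <;> norm_num
  have hac0 : s * α c0 ≠ 0 := mul_ne_zero hsne (hc0 α hα)
  set c : Vr r := if 0 < s * α c0 then c0 else -c0 with hcdef
  have hc : ∀ β ∈ R, β c ≠ 0 := by
    intro β hβ
    rw [hcdef]
    split_ifs
    · exact hc0 β hβ
    · simp only [map_neg, ne_eq, neg_eq_zero]
      exact hc0 β hβ
  have hsc : 0 < s * α c := by
    rw [hcdef]
    split_ifs with h
    · exact h
    · have hlt : s * α c0 < 0 := lt_of_le_of_ne (not_lt.mp h) hac0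
      simp only [map_neg, mul_neg]
      linarith
  -- perturb p in direction c
  have hmemnhds : (fun t : ℝ => p + t • c) ⁻¹' sCell R p ∈ nhds (0 : ℝ) := by
    refine ((isOpen_sCell R p).preimage
      (continuous_const.add (continuous_id.smul continuous_const))).mem_nhds ?_
    show p + (0:ℝ) • c ∈ sCell R p
    rw [zero_smul, add_zero]; exact mem_sCell_self R p
  obtain ⟨δ, hδpos, hδ⟩ := Metric.mem_nhds_iff.mp hmemnhds
  set t : ℝ := δ / 2 with htdef
  have ht : 0 < t := by positivity
  have htz : p + t • c ∈ sCell R p := by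
    apply hδ
    simp only [Metric.mem_ball, Real.dist_eq, sub_zero, htdef]
    rw [abs_of_pos (by positivity)]
    linarith
  set z : Vr r := p + t • c with hzdef
  have hz3 : ∀ β ∈ R, β p = 0 → β z = t * β c := by
    intro β hβ h
    simp [hzdef, map_add, map_smul, smul_eq_mul, h]
  have hzU : ∀ β ∈ R, β z ≠ 0 := by
    intro β hβ
    rcases lt_trichotomy (β p) 0 with h | h | h
    · exact ((htz β hβ).2 h).ne
    · rw [hz3 β hβ h]; exact mul_ne_zero ht.ne' (hc β hβ)
    · exact ((htz β hβ).1 h).ne'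
  refine ⟨sCell R z, ?_, ?_, ?_⟩
  · refine ⟨z, ?_, ?_⟩
    · rw [hUc]; exact hzU
    · rw [hUc, comp_eq_sCell R hzU]
  · rw [closure_sCell R z]
    intro y hy β hβ
    rcases lt_trichotomy (β p) 0 with hsgn | hsgn | hsgn
    · have hzneg : β z < 0 := (htz β hβ).2 hsgn
      refine ⟨fun h => absurd h (asymm hzneg), fun _ => ?_⟩
      rcases hside β hβ with h' | h'
      · exact absurd (h' p hpP) (not_le.mpr hsgn)
      · exact h' y hy
    · have h0 : β y = 0 := by
        by_contra hne
        exact hrel β hβ ⟨y, hy, hne⟩ hsgn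
      exact ⟨fun _ => h0.ge, fun _ => h0.le⟩
    · have hzpos : 0 < β z := (htz β hβ).1 hsgn
      refine ⟨fun _ => ?_, fun h => absurd h (asymm hzpos)⟩
      rcases hside β hβ with h' | h'
      · exact h' y hy
      · exact absurd (h' p hpP) (not_le.mpr hsgn)
  · rw [closure_sCell R z]
    intro x hx
    have hsaz : 0 < s * α z := by
      rcases eq_or_ne (α p) 0 with h | h
      · rw [hz3 α hα h]
        calc (0:ℝ) < t * (s * α c) := mul_pos ht hsc
        _ = s * (t * α c) := by ring
      · have hap : 0 < s * α p := lt_of_le_of_ne (hPα p hpP) (Ne.symm (mul_ne_zero hsne h))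
        rcases hs with rfl | rfl
        · have : 0 < α p := by linarith
          have := (htz α hα).1 this
          linarith
        · have : α p < 0 := by nlinarith
          have := (htz α hα).2 this
          nlinarith
    rcases hs with rfl | rfl
    · have hzpos : 0 < α z := by linarith
      have := (hx α hα).1 hzpos
      linarith
    · have hzneg : α z < 0 := by nlinarith
      have := (hx α hα).2 hzneg
      nlinarith

end Stmt15Aux

/-- `φ : n ↦ (α(n))_{α ∈ R}` is a map of fans from `Σ_R` to the
Boolean fan, and the preimage of every Boolean cone is a cone of `Σ_R`. -/
theorem stmt15 {r : ℕ} (A : Finset (Set (Vr r))) (R : Finset (Vr r →ₗ[ℝ] ℝ))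
    (hcr : IsCrystArr A R) :
    (∀ σ ∈ closedChamberInts A, ∃ ε : {α // α ∈ R} → SignType,
      (LinearMap.pi fun α : {α // α ∈ R} => (α : Vr r →ₗ[ℝ] ℝ)) '' σ ⊆ boolCone ε) ∧
    ∀ ε : {α // α ∈ R} → SignType,
      (LinearMap.pi fun α : {α // α ∈ R} => (α : Vr r →ₗ[ℝ] ℝ)) ⁻¹' boolCone ε ∈
        closedChamberInts A := by
  classical
  have hUc := sUnion_compl_eq A R hcr
  constructor
  · rintro σ ⟨S, hSne, hSsub, rfl⟩
    obtain ⟨K₀, hK₀S⟩ := hSne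
    obtain ⟨x₀, hx₀U, hK₀eq⟩ := hSsub hK₀S
    rw [Set.mem_compl_iff] at hx₀U
    have hx₀ : ∀ β ∈ R, β x₀ ≠ 0 := by
      have := hUc ▸ (Set.mem_compl hx₀U)
      exact this
    have hcl : closure K₀ = cCell R x₀ := by
      rw [hK₀eq, hUc, comp_eq_sCell R hx₀, closure_sCell]
    refine ⟨fun a => if 0 < (a : Vr r →ₗ[ℝ] ℝ) x₀ then SignType.pos else SignType.neg, ?_⟩
    rintro v ⟨y, hy, rfl⟩
    have hyc : y ∈ cCell R x₀ := by
      rw [← hcl]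
      exact Set.sInter_subset_of_mem (Set.mem_image_of_mem closure hK₀S) hy
    intro a
    have hpi : (LinearMap.pi fun α : {α // α ∈ R} => (α : Vr r →ₗ[ℝ] ℝ)) y a
        = (a : Vr r →ₗ[ℝ] ℝ) y := rfl
    by_cases h : 0 < (a : Vr r →ₗ[ℝ] ℝ) x₀
    · simp only [if_pos h]
      exact ⟨fun _ => by rw [hpi]; exact (hyc a.1 a.2).1 h,
        fun habs => absurd habs (by decide), fun habs => absurd habs (by decide)⟩
    · simp only [if_neg h]
      have hneg : (a : Vr r →ₗ[ℝ] ℝ) x₀ < 0 :=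
        lt_of_le_of_ne (not_lt.mp h) (hx₀ a.1 a.2)
      exact ⟨fun habs => absurd habs (by decide), fun habs => absurd habs (by decide),
        fun _ => by rw [hpi]; exact (hyc a.1 a.2).2 hneg⟩
  · intro ε
    set P := (LinearMap.pi fun α : {α // α ∈ R} => (α : Vr r →ₗ[ℝ] ℝ)) ⁻¹' boolCone ε
      with hPdef
    have hPmem : ∀ y : Vr r, y ∈ P ↔ ∀ i : {α // α ∈ R},
        (ε i = SignType.pos → 0 ≤ (i : Vr r →ₗ[ℝ] ℝ) y) ∧
        (ε i = SignType.zero → (i : Vr r →ₗ[ℝ] ℝ) y = 0) ∧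
        (ε i = SignType.neg → (i : Vr r →ₗ[ℝ] ℝ) y ≤ 0) := fun y => Iff.rfl
    have hP0 : (0 : Vr r) ∈ P :=
      (hPmem 0).mpr (fun i => ⟨fun _ => by simp, fun _ => by simp, fun _ => by simp⟩)
    have hPadd : ∀ x ∈ P, ∀ y ∈ P, x + y ∈ P := by
      intro x hx y hy
      have hx' := (hPmem x).mp hx
      have hy' := (hPmem y).mp hy
      refine (hPmem (x + y)).mpr (fun i => ⟨fun h => ?_, fun h => ?_, fun h => ?_⟩)
      · rw [map_add]; exact add_nonneg ((hx' i).1 h) ((hy' i).1 h)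
      · rw [map_add, (hx' i).2.1 h, (hy' i).2.1 h, add_zero]
      · rw [map_add]; exact add_nonpos ((hx' i).2.2 h) ((hy' i).2.2 h)
    have hside : ∀ β ∈ R, (∀ y ∈ P, 0 ≤ β y) ∨ (∀ y ∈ P, β y ≤ 0) := by
      intro β hβ
      cases h : ε ⟨β, hβ⟩ with
      | zero => exact Or.inl fun y hy => le_of_eq (((hPmem y).mp hy ⟨β, hβ⟩).2.1 h).symm
      | neg => exact Or.inr fun y hy => ((hPmem y).mp hy ⟨β, hβ⟩).2.2 h
      | pos => exact Or.inl fun y hy => ((hPmem y).mp hy ⟨β, hβ⟩).1 h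
    refine ⟨{K | K ∈ chambers A ∧ P ⊆ closure K}, ?_, fun K hK => hK.1, ?_⟩
    · -- nonemptiness
      rcases Finset.eq_empty_or_nonempty R with hR | hRne
      · have hA0 : (A : Set (Set (Vr r))) = ∅ := by rw [hcr.hyps, hR]; simp
        have hU : (⋃₀ (A : Set (Set (Vr r))))ᶜ = Set.univ := by rw [hA0]; simp
        have huniv : connectedComponentIn ((⋃₀ (A : Set (Set (Vr r))))ᶜ) (0 : Vr r)
            = Set.univ := by
          rw [hU]
          exact Set.eq_univ_of_univ_subset
            (isPreconnected_univ.subset_connectedComponentIn (Set.mem_univ 0) subset_rfl)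
        refine ⟨Set.univ, ⟨⟨0, ?_, huniv.symm⟩, ?_⟩⟩
        · rw [hU]; trivial
        · simp
      · obtain ⟨α₀, hα₀⟩ := hRne
        rcases hside α₀ hα₀ with h | h
        · obtain ⟨K, hK, hPK, _⟩ := main_chamber A R hcr P hP0 hPadd hside hα₀
            (Or.inl rfl) (fun y hy => by rw [one_mul]; exact h y hy)
          exact ⟨K, hK, hPK⟩
        · obtain ⟨K, hK, hPK, _⟩ := main_chamber A R hcr P hP0 hPadd hside hα₀
            (Or.inr rfl) (fun y hy => by have := h y hy; linarith)
          exact ⟨K, hK, hPK⟩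
    · -- P equals the intersection of the closed chambers containing it
      apply Set.Subset.antisymm
      · intro w hw
        refine Set.mem_sInter.mpr ?_
        rintro T ⟨K, hKS, rfl⟩
        exact hKS.2 hw
      · intro w hw
        by_contra hwP
        have hex : ∃ i : {α // α ∈ R},
            ¬((ε i = SignType.pos → 0 ≤ (i : Vr r →ₗ[ℝ] ℝ) w) ∧
              (ε i = SignType.zero → (i : Vr r →ₗ[ℝ] ℝ) w = 0) ∧
              (ε i = SignType.neg → (i : Vr r →ₗ[ℝ] ℝ) w ≤ 0)) := by
          by_contra hall
          push_neg at hall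
          exact hwP ((hPmem w).mpr hall)
        obtain ⟨i, hi⟩ := hex
        have hmain : ∃ s : ℝ, (s = 1 ∨ s = -1) ∧
            (∀ y ∈ P, 0 ≤ s * (i : Vr r →ₗ[ℝ] ℝ) y) ∧ s * (i : Vr r →ₗ[ℝ] ℝ) w < 0 := by
          cases h : ε i with
          | zero =>
            have hB : (i : Vr r →ₗ[ℝ] ℝ) w ≠ 0 := by
              intro h0
              exact hi ⟨fun hp => absurd (h.symm.trans hp) (by decide), fun _ => h0,
                fun hn => absurd (h.symm.trans hn) (by decide)⟩
            rcases lt_or_gt_of_ne hB with hneg | hpos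
            · refine ⟨1, Or.inl rfl, fun y hy => ?_, by rw [one_mul]; exact hneg⟩
              rw [one_mul]
              exact le_of_eq (((hPmem y).mp hy i).2.1 h).symm
            · refine ⟨-1, Or.inr rfl, fun y hy => ?_, by linarith⟩
              have := ((hPmem y).mp hy i).2.1 h
              rw [this]; norm_num
          | neg =>
            have hC : ¬ (i : Vr r →ₗ[ℝ] ℝ) w ≤ 0 := by
              intro h0
              exact hi ⟨fun hp => absurd (h.symm.trans hp) (by decide),
                fun hz => absurd (h.symm.trans hz) (by decide), fun _ => h0⟩
            refine ⟨-1, Or.inr rfl, fun y hy => ?_, by push_neg at hC; linarith⟩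
            have := ((hPmem y).mp hy i).2.2 h
            linarith
          | pos =>
            have hA : ¬ 0 ≤ (i : Vr r →ₗ[ℝ] ℝ) w := by
              intro h0
              exact hi ⟨fun _ => h0, fun hz => absurd (h.symm.trans hz) (by decide),
                fun hn => absurd (h.symm.trans hn) (by decide)⟩
            refine ⟨1, Or.inl rfl, fun y hy => ?_, by push_neg at hA; linarith⟩
            rw [one_mul]
            exact ((hPmem y).mp hy i).1 h
        obtain ⟨s, hs, hPα, hviol⟩ := hmain
        obtain ⟨K, hK, hPK, hKα⟩ := main_chamber A R hcr P hP0 hPadd hside i.2 hs hPα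
        have hwK : w ∈ closure K :=
          hw (closure K) ⟨K, ⟨hK, hPK⟩, rfl⟩
        exact absurd (hKα w hwK) (not_le.mpr hviol)
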